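/- Product bound: suppose there exist m₀ ≥ 2, δ > 0, λ > δ such that f(j) ≤ (λ-δ)j for all j ≥ m₀. Let μ = λ/(λ-δ). Then for all integers i ≥ m ≥ m₀ and k ≥ 1, ∏_{j=m}^{i-1} f(j)/(kλ + f(j)) ≤ ((kμ+m)/(kμ+i))^{kμ}. -/

import Mathlib

open Finset Real

lemma key_step (a : ℝ) (ha : 0 < a) (x : ℝ) (hx : 0 ≤ x) :
    x / (a + x) ≤ ((a + x) / (a + x + 1)) ^ a := by
  have hax : 0 < a + x := by linarith
  have hb : 0 < (a + x) / (a + x + 1) := by positivity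
  rw [Real.rpow_def_of_pos hb]
  have hlog : Real.log ((a + x) / (a + x + 1)) = - Real.log ((a + x + 1) / (a + x)) := by
    rw [← Real.log_inv, inv_div]
  have h1 : Real.log ((a + x + 1) / (a + x)) ≤ 1 / (a + x) := by
    have := Real.log_le_sub_one_of_pos (x := (a + x + 1) / (a + x)) (by positivity)
    have : Real.log ((a + x + 1) / (a + x)) ≤ (a + x + 1) / (a + x) - 1 := this
    have heq : (a + x + 1) / (a + x) - 1 = 1 / (a + x) := by
      field_simp
      ring
    linarith [heq ▸ this]
  have h2 : -(a / (a + x)) ≤ a * Real.log ((a + x) / (a + x + 1)) := by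
    rw [hlog]
    have := mul_le_mul_of_nonneg_left h1 ha.le
    rw [mul_one_div] at this
    linarith
  calc x / (a + x) = -(a / (a + x)) + 1 := by field_simp; ring
    _ ≤ Real.exp (-(a / (a + x))) := Real.add_one_le_exp _
    _ ≤ Real.exp (a * Real.log ((a + x) / (a + x + 1))) := Real.exp_le_exp.mpr h2
    _ = Real.exp (Real.log ((a + x) / (a + x + 1)) * a) := by rw [mul_comm]

lemma prod_ratio_bound (a : ℝ) (ha : 0 < a) :
    ∀ m i : ℕ, m ≤ i →
      ∏ j ∈ Finset.Ico m i, (j : ℝ) / (a + j) ≤ ((a + m) / (a + i)) ^ a := by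
  intro m i hmi
  induction i, hmi using Nat.le_induction with
  | base =>
    simp [Real.rpow_natCast]
    rw [div_self (by positivity), Real.one_rpow]
  | succ i hmi ih =>
    rw [Finset.prod_Ico_succ_top hmi]
    have hprodnn : (0:ℝ) ≤ ∏ j ∈ Finset.Ico m i, (j : ℝ) / (a + j) := by
      apply Finset.prod_nonneg
      intro j hj
      have : (0:ℝ) ≤ (j:ℝ) := Nat.cast_nonneg j
      positivity
    have hkey := key_step a ha (i : ℝ) (Nat.cast_nonneg i)
    have hfac : (0:ℝ) ≤ (i:ℝ) / (a + i) := by positivity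
    calc (∏ j ∈ Finset.Ico m i, (j : ℝ) / (a + j)) * ((i:ℝ) / (a + i))
        ≤ ((a + m) / (a + i)) ^ a * (((a + i) / (a + i + 1)) ^ a) := by
          apply mul_le_mul ih hkey hfac (by positivity)
      _ = (((a + m) / (a + i)) * ((a + i) / (a + i + 1))) ^ a := by
          rw [← Real.mul_rpow (by positivity) (by positivity)]
      _ = ((a + m) / (a + ((i:ℕ)+1:ℕ))) ^ a := by
          have h2 : a + (i:ℝ) ≠ 0 := by positivity
          have h3 : a + (i:ℝ) + 1 ≠ 0 := by positivity
          congr 1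
          push_cast
          field_simp
          ring

/-- Product bound: if `f(j) ≤ (λ-δ)j` for all `j ≥ m₀` (with `m₀ ≥ 2`, `λ > δ > 0`),
then, with `μ = λ/(λ-δ)`, for all integers `i ≥ m ≥ m₀` and `k ≥ 1`,
`∏_{j=m}^{i-1} f(j)/(kλ + f(j)) ≤ ((kμ+m)/(kμ+i))^{kμ}`. -/
theorem product_bound (f : ℕ → ℝ) (hfpos : ∀ j : ℕ, 1 ≤ j → 0 < f j)
    (m₀ : ℕ) (hm₀ : 2 ≤ m₀) (lam δ : ℝ) (hδ : 0 < δ) (hlam : δ < lam)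
    (hf : ∀ j : ℕ, m₀ ≤ j → f j ≤ (lam - δ) * j)
    (μ : ℝ) (hμ : μ = lam / (lam - δ)) :
    ∀ k m i : ℕ, 1 ≤ k → m₀ ≤ m → m ≤ i →
      ∏ j ∈ Finset.Ico m i, f j / ((k : ℝ) * lam + f j)
        ≤ (((k : ℝ) * μ + m) / ((k : ℝ) * μ + i)) ^ ((k : ℝ) * μ) := by
  intro k m i hk hm hmi
  have hld : 0 < lam - δ := by linarith
  have hlampos : 0 < lam := by linarith
  have hμpos : 0 < μ := by rw [hμ]; positivity
  have hk1 : (1:ℝ) ≤ (k:ℝ) := by exact_mod_cast hk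
  have ha : 0 < (k:ℝ) * μ := by positivity
  have hμld : μ * (lam - δ) = lam := by
    rw [hμ]; field_simp
  -- Step 1: compare with ∏ j/(kμ+j)
  have step1 : ∏ j ∈ Finset.Ico m i, f j / ((k : ℝ) * lam + f j)
      ≤ ∏ j ∈ Finset.Ico m i, (j : ℝ) / ((k:ℝ) * μ + j) := by
    apply Finset.prod_le_prod
    · intro j hj
      have hj1 : 1 ≤ j := by
        have := (Finset.mem_Ico.mp hj).1; omega
      have hfj := hfpos j hj1
      positivity
    · intro j hj
      have hjm : m ≤ j := (Finset.mem_Ico.mp hj).1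
      have hjm₀ : m₀ ≤ j := le_trans hm hjm
      have hj1 : 1 ≤ j := by omega
      have hfj := hfpos j hj1
      have hfle := hf j hjm₀
      have hjpos : (0:ℝ) < (j:ℝ) := by exact_mod_cast hj1
      have h1 : f j / ((k : ℝ) * lam + f j) ≤ (lam - δ) * j / ((k:ℝ) * lam + (lam - δ) * j) := by
        rw [div_le_div_iff₀ (by positivity) (by positivity)]
        nlinarith [mul_le_mul_of_nonneg_left hfle (le_of_lt (by positivity : (0:ℝ) < (k:ℝ) * lam))]
      have h2 : (lam - δ) * j / ((k:ℝ) * lam + (lam - δ) * j) = (j : ℝ) / ((k:ℝ) * μ + j) := by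
        have : (k:ℝ) * lam + (lam - δ) * j = (lam - δ) * ((k:ℝ) * μ + j) := by
          rw [hμ]; field_simp
        rw [this, mul_div_mul_left _ _ (ne_of_gt hld)]
      linarith [h2 ▸ h1]
  calc ∏ j ∈ Finset.Ico m i, f j / ((k : ℝ) * lam + f j)
      ≤ ∏ j ∈ Finset.Ico m i, (j : ℝ) / ((k:ℝ) * μ + j) := step1
    _ ≤ (((k:ℝ) * μ + m) / ((k:ℝ) * μ + i)) ^ ((k:ℝ) * μ) := prod_ratio_bound _ ha m i hmi
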